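/- For any finite collection of events E_1, ..., E_N in a probability space, P(⋃_{j=1}^N E_j) ≤ Σ_{j=1}^N P(E_j) − Σ_{j=1}^{N−1} P(E_j ∩ E_{j+1}). -/
import Mathlib


open MeasureTheory ProbabilityTheory

lemma hunter_key {Ω : Type*} [MeasureSpace Ω]
    [IsProbabilityMeasure (ℙ : Measure Ω)] {A B C : Set Ω}
    (hA : MeasurableSet A) (_hB : MeasurableSet B) (hCA : C ⊆ A) :
    (ℙ (A ∪ B)).toReal ≤ (ℙ A).toReal + (ℙ B).toReal - (ℙ (C ∩ B)).toReal := by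
  have h1 : ℙ (A ∪ B) + ℙ (A ∩ B) = ℙ A + ℙ B := measure_union_add_inter' hA B
  have h2 : ℙ (C ∩ B) ≤ ℙ (A ∩ B) := measure_mono (Set.inter_subset_inter_left B hCA)
  have f1 : ℙ (A ∪ B) ≠ ⊤ := measure_ne_top _ _
  have f2 : ℙ (A ∩ B) ≠ ⊤ := measure_ne_top _ _
  have f3 : ℙ A ≠ ⊤ := measure_ne_top _ _
  have f4 : ℙ B ≠ ⊤ := measure_ne_top _ _
  have h1' : (ℙ (A ∪ B)).toReal + (ℙ (A ∩ B)).toReal = (ℙ A).toReal + (ℙ B).toReal := by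
    rw [← ENNReal.toReal_add f1 f2, ← ENNReal.toReal_add f3 f4, h1]
  have h2' : (ℙ (C ∩ B)).toReal ≤ (ℙ (A ∩ B)).toReal := ENNReal.toReal_mono f2 h2
  linarith

/-- Hunter's inequality (chain variant), sharpening Boole's inequality by
subtracting the probabilities of intersections of consecutive events. -/
theorem hunters_inequality {Ω : Type*} [MeasureSpace Ω]
    [IsProbabilityMeasure (ℙ : Measure Ω)] (N : ℕ) (E : ℕ → Set Ω)
    (hE : ∀ j, MeasurableSet (E j)) :
    (ℙ (⋃ j ∈ Finset.Icc 1 N, E j)).toReal ≤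
      ∑ j ∈ Finset.Icc 1 N, (ℙ (E j)).toReal
        - ∑ j ∈ Finset.Icc 1 (N - 1), (ℙ (E j ∩ E (j + 1))).toReal := by
  induction N with
  | zero => simp
  | succ n ih =>
    rcases Nat.eq_zero_or_pos n with h0 | hpos
    · subst h0; simp
    · have hn : 1 ≤ n := hpos
      have hins : ∀ m : ℕ, Finset.Icc 1 (m + 1) = insert (m + 1) (Finset.Icc 1 m) := by
        intro m; ext x; simp [Finset.mem_Icc]; omega
      have hU : (⋃ j ∈ Finset.Icc 1 (n + 1), E j)
          = (⋃ j ∈ Finset.Icc 1 n, E j) ∪ E (n + 1) := by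
        rw [hins n, Finset.set_biUnion_insert, Set.union_comm]
      have hSum1 : ∑ j ∈ Finset.Icc 1 (n + 1), (ℙ (E j)).toReal
          = ∑ j ∈ Finset.Icc 1 n, (ℙ (E j)).toReal + (ℙ (E (n + 1))).toReal := by
        rw [hins n, Finset.sum_insert (by simp)]
        ring
      have hSum2 : ∑ j ∈ Finset.Icc 1 (n + 1 - 1), (ℙ (E j ∩ E (j + 1))).toReal
          = ∑ j ∈ Finset.Icc 1 (n - 1), (ℙ (E j ∩ E (j + 1))).toReal
            + (ℙ (E n ∩ E (n + 1))).toReal := by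
        have : n + 1 - 1 = (n - 1) + 1 := by omega
        rw [this, hins (n-1), Finset.sum_insert (by simp), (by omega : n - 1 + 1 = n)]
        ring
      have hsub : E n ⊆ ⋃ j ∈ Finset.Icc 1 n, E j := by
        intro x hx
        exact Set.mem_biUnion (Finset.mem_Icc.mpr ⟨hn, le_rfl⟩) hx
      have hmeas : MeasurableSet (⋃ j ∈ Finset.Icc 1 n, E j) :=
        Finset.measurableSet_biUnion _ fun j _ => hE j
      have key := hunter_key hmeas (hE (n + 1)) hsub
      rw [hU, hSum1, hSum2]
      linarith
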